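/- With respect to the form ⟨(X,Y),(X',Y')⟩ = Re κ(X,X') − Re κ(Y,Y') on g × g, the orthogonal complement of k (the compact real form, diagonally embedded) equals k_C + b, where k_C is the diagonal of g × g and b = a + n is diagonally embedded via the real form. -/

import Mathlib

/- STATEMENT 6: With respect to the form `⟨(X,Y),(X',Y')⟩ = Re κ(X,X') − Re κ(Y,Y')`
on `g × g`, the orthogonal complement of `k` (the compact real form, embedded in
`g × g` as the diagonal `{(W,W) : W ∈ k}` via the double complexification
`W ↦ (W, W̄)`) equals `k_C + b`, where `k_C` is the diagonal of `g × g` and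
`b = a + n` is embedded via the real form, `W ↦ (W, W̄)`.
Here `conj` is the conjugation of `g` with respect to the compact real form
`k = {X : conj X = X}`, `a` satisfies `conj = -id` on `a`, and `n`, `n̄` are the
nilpotent subalgebras exchanged by `conj`; the Iwasawa decomposition
`g = k ⊕ a ⊕ n` (over ℝ) is supplied as a hypothesis. -/
theorem orthogonal_complement_of_k
    (g : Type*) [LieRing g] [LieAlgebra ℂ g] [Module.Finite ℂ g]
    [LieAlgebra.IsKilling ℂ g]
    (conj : g →ₗ[ℝ] g)
    (hconjI : ∀ X : g, conj (Complex.I • X) = -(Complex.I • conj X))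
    (hconj2 : ∀ X : g, conj (conj X) = X)
    (hconjκ : ∀ X Y : g,
      killingForm ℂ g (conj X) (conj Y) = (starRingEnd ℂ) (killingForm ℂ g X Y))
    (k : Set g) (hk : k = {X : g | conj X = X})
    (a : Submodule ℝ g) (n nbar : Submodule ℂ g)
    (ha : ∀ Z ∈ a, conj Z = -Z)
    (hconjn : ∀ X : g, X ∈ n ↔ conj X ∈ nbar)
    (hIw : ∀ X : g, ∃ W Z N, W ∈ k ∧ Z ∈ a ∧ N ∈ n ∧ X = W + Z + N)
    (hind : ∀ W Z N, W ∈ k → Z ∈ a → N ∈ n → W + Z + N = 0 →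
      W = 0 ∧ Z = 0 ∧ N = 0)
    (B : g × g → g × g → ℝ)
    (hB : ∀ U V : g × g,
      B U V = (killingForm ℂ g U.1 V.1).re - (killingForm ℂ g U.2 V.2).re) :
    {U : g × g | ∀ W ∈ k, B U (W, W) = 0}
      = {U : g × g | ∃ Z : g, ∃ Za ∈ a, ∃ N ∈ n,
          U = (Z, Z) + (Za + N, conj (Za + N))} := by
  set κ := killingForm ℂ g with hκ
  -- κ is real on k × k
  have hrealk : ∀ V W : g, conj V = V → conj W = W → (κ V W).im = 0 := by
    intro V W hV hW
    have h := hconjκ V W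
    rw [hV, hW] at h
    have h2 : (κ V W).im = -(κ V W).im := by
      conv_lhs => rw [h]
      simp
    linarith
  -- re κ(V,W) = 0 when conj V = -V, conj W = W
  have hskew : ∀ V W : g, conj V = -V → conj W = W → (κ V W).re = 0 := by
    intro V W hV hW
    have h := hconjκ V W
    rw [hV, hW] at h
    have h3 : κ (-V) W = -(κ V W) := by simp
    rw [h3] at h
    have h2 : (κ V W).re = -(κ V W).re := by
      conv_lhs => rw [← neg_neg (κ V W), h]
      simp
    linarith
  -- decomposition into real and imaginary parts w.r.t. k
  have hdecomp : ∀ X : g, ∃ X1 X2 : g, conj X1 = X1 ∧ conj X2 = X2 ∧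
      X = X1 + Complex.I • X2 := by
    intro X
    refine ⟨(2⁻¹ : ℝ) • (X + conj X),
      (2⁻¹ : ℝ) • (-(Complex.I • (X - conj X))), ?_, ?_, ?_⟩
    · rw [map_smul, map_add, hconj2, add_comm]
    · rw [map_smul, map_neg, hconjI, neg_neg, map_sub, hconj2]
      congr 1
      rw [← smul_neg, neg_sub]
    · have : Complex.I • ((2⁻¹ : ℝ) • (-(Complex.I • (X - conj X))))
          = (2⁻¹ : ℝ) • (X - conj X) := by
        rw [smul_comm, smul_neg, smul_smul, Complex.I_mul_I]
        simp
      rw [this, ← smul_add]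
      have : X + conj X + (X - conj X) = (2 : ℝ) • X := by
        rw [two_smul]; abel
      rw [this, smul_smul]
      norm_num
  -- key: if Re κ(V,W) = 0 for all W ∈ k then conj V = -V
  have hkey : ∀ V : g, (∀ W : g, conj W = W → (κ V W).re = 0) → conj V = -V := by
    intro V hV
    obtain ⟨V1, V2, hV1, hV2, hVd⟩ := hdecomp V
    -- κ V1 W = 0 for all W ∈ k
    have h1 : ∀ W : g, conj W = W → κ V1 W = 0 := by
      intro W hW
      have hsplit : κ V W = κ V1 W + Complex.I * κ V2 W := by
        rw [hVd]; simp
      have him2 : (κ V2 W).im = 0 := hrealk V2 W hV2 hW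
      have hIre : (Complex.I * κ V2 W).re = 0 := by simp [him2]
      have hre1 : (κ V1 W).re = 0 := by
        have h0 : (κ V1 W).re + (Complex.I * (κ V2 W)).re = 0 := by
          rw [← Complex.add_re, ← hsplit]; exact hV W hW
        linarith
      exact Complex.ext hre1 (hrealk V1 W hV1 hW)
    -- hence κ V1 X = 0 for all X, so V1 = 0
    have hV10 : V1 = 0 := by
      apply (LieAlgebra.IsKilling.killingForm_nondegenerate ℂ g).1 V1
      intro X
      obtain ⟨X1, X2, hX1, hX2, hXd⟩ := hdecomp X
      rw [hXd]
      simp [← hκ, h1 X1 hX1, h1 X2 hX2]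
    rw [hVd, hV10, zero_add, hconjI, hV2]
  -- forward inclusion will use this; now prove set equality
  ext ⟨X, Y⟩
  simp only [Set.mem_setOf_eq]
  constructor
  · intro hU
    -- D = X - Y satisfies conj D = -D
    have hD : conj (X - Y) = -(X - Y) := by
      apply hkey
      intro W hW
      have := hU W (by rw [hk]; exact hW)
      rw [hB] at this
      have hsub : (κ (X - Y) W).re = (κ X W).re - (κ Y W).re := by simp
      rw [hsub]
      simpa using this
    obtain ⟨W, Z', N', hWk, hZ'a, hN'n, hDe⟩ := hIw (X - Y)
    rw [hk] at hWk
    have hWc : conj W = W := hWk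
    have hWe : W = (2⁻¹ : ℝ) • (-(N' + conj N')) := by
      have h1 : conj (W + Z' + N') = W - Z' + conj N' := by
        rw [map_add, map_add, hWc, ha Z' hZ'a]
        abel
      rw [hDe, h1] at hD
      have h2 : (2 : ℝ) • W + (N' + conj N') = 0 := by
        rw [two_smul]
        have : W - Z' + conj N' + (W + Z' + N') = 0 := by rw [hD]; abel
        rw [← this]; abel
      have h3 : (2 : ℝ) • W = -(N' + conj N') := eq_neg_of_add_eq_zero_left h2
      rw [← h3, smul_smul]
      norm_num
    refine ⟨X - ((2⁻¹ : ℝ) • Z' + (2⁻¹ : ℝ) • N'), (2⁻¹ : ℝ) • Z',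
      a.smul_mem _ hZ'a, (2⁻¹ : ℝ) • N', ?_, ?_⟩
    · rw [← Complex.coe_smul]
      exact n.smul_mem _ hN'n
    · have hc : conj ((2⁻¹ : ℝ) • Z' + (2⁻¹ : ℝ) • N')
          = -((2⁻¹ : ℝ) • Z') + (2⁻¹ : ℝ) • conj N' := by
        rw [map_add, map_smul, map_smul, ha Z' hZ'a, smul_neg]
      ext
      · simp only [Prod.fst_add]
        abel
      · simp only [Prod.snd_add, hc]
        have hY : Y = X - (X - Y) := by abel
        rw [hY, hDe, hWe]
        module
  · rintro ⟨Z, Za, hZa, N, hN, hXY⟩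
    intro W hWk
    rw [hk] at hWk
    rw [hB]
    have hX : X = Z + (Za + N) := by
      have := congrArg Prod.fst hXY; simpa using this
    have hY : Y = Z + conj (Za + N) := by
      have := congrArg Prod.snd hXY; simpa using this
    simp only
    have h1 : κ X W = κ Z W + κ (Za + N) W := by rw [hX]; simp
    have h2 : κ Y W = κ Z W + κ (conj (Za + N)) W := by rw [hY]; simp
    rw [h1, h2]
    have h3 : (κ ((Za + N) - conj (Za + N)) W).re = 0 := by
      apply hskew _ _ _ hWk
      rw [map_sub, hconj2, neg_sub]
    have h4 : κ ((Za + N) - conj (Za + N)) W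
        = κ (Za + N) W - κ (conj (Za + N)) W := by simp
    rw [h4] at h3
    simp only [Complex.add_re, Complex.sub_re] at *
    linarith
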